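/- arXiv:2206.14106 — 2 statements merged into one kernel-verified Lean document; each statement's English description precedes it below -/
import Mathlib

section
/- Let g : ℝ^n → ℝ^m be a smooth (C^∞) map, let M = g⁻¹(0), and let p ∈ M be a point at which the Jacobian dg_p is surjective. Write T_pM = ker(dg_p) and let N_pM be the orthogonal complement of T_pM in ℝ^n with respect to the Euclidean inner product. Then there exist ε > 0, δ > 0 and a smooth map R_p : {v ∈ T_pM : ‖v‖ < ε} → ℝ^n such that for every v with ‖v‖ < ε: (i) R_p(v) ∈ M, and ‖p + v − R_p(v)‖ ≤ ‖p + v − y‖ for every y ∈ M with ‖y − p‖ < δ, with equality only when y = R_p(v) (i.e. R_p(v) is the unique local Euclidean-closest point of M to p + v); (ii) R_p(0) = p; (iii) for every v, the curve c(t) = R_p(tv) satisfies c′(0) = v; and (iv) c″(0) ∈ N_pM (the second-order retraction property). -/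
open ContinuousLinearMap Topology Filter

noncomputable section EDRaux

set_option linter.unusedSectionVars false
set_option linter.unnecessarySimpa false

variable {E : Type*} [NormedAddCommGroup E] [InnerProductSpace ℝ E] [FiniteDimensional ℝ E]
variable {F : Type*} [NormedAddCommGroup F] [InnerProductSpace ℝ F] [FiniteDimensional ℝ F]


/-- adjoint as a continuous linear map (real case). -/
def EDR.adjL : (E →L[ℝ] F) →L[ℝ] (F →L[ℝ] E) :=
  LinearMap.mkContinuous
    { toFun := ContinuousLinearMap.adjoint
      map_add' := fun A B => map_add _ _ _
      map_smul' := fun c A => by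
        simpa using (ContinuousLinearMap.adjoint : (E →L[ℝ] F) ≃ₗᵢ⋆[ℝ] (F →L[ℝ] E)).map_smul c A }
    1 (fun A => by
      simpa using ((ContinuousLinearMap.adjoint : (E →L[ℝ] F) ≃ₗᵢ⋆[ℝ] (F →L[ℝ] E)).norm_map A).le)

@[simp] lemma EDR.adjL_apply (A : E →L[ℝ] F) : EDR.adjL A = ContinuousLinearMap.adjoint A := rfl

lemma EDR.isUnit_of_bijective {G : Type*} [NormedAddCommGroup G] [NormedSpace ℝ G]
    [FiniteDimensional ℝ G] (B : G →L[ℝ] G) (h : Function.Bijective B) : IsUnit B := by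
  let e := (LinearEquiv.ofBijective (B : G →ₗ[ℝ] G) h).toContinuousLinearEquiv
  have he : (e : G →L[ℝ] G) = B := by ext x; rfl
  exact ⟨(ContinuousLinearEquiv.unitsEquiv ℝ G).symm e, he⟩

lemma EDR.exists_equiv_of_isUnit {G : Type*} [NormedAddCommGroup G] [NormedSpace ℝ G]
    (B : G →L[ℝ] G) (h : IsUnit B) : ∃ e : G ≃L[ℝ] G, (e : G →L[ℝ] G) = B := by
  obtain ⟨u, hu⟩ := h
  exact ⟨ContinuousLinearEquiv.unitsEquiv ℝ G u, by rw [← hu]; rfl⟩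

lemma EDR.range_adjoint_le_orthogonal (A : E →L[ℝ] F) :
    ∀ μ : F, ContinuousLinearMap.adjoint A μ ∈ (LinearMap.ker (A : E →ₗ[ℝ] F))ᗮ := by
  intro μ
  rw [Submodule.mem_orthogonal]
  intro x hx
  have hx' : A x = 0 := hx
  rw [real_inner_comm, ContinuousLinearMap.adjoint_inner_left, hx', inner_zero_right]

lemma EDR.isUnit_AAadj (A : E →L[ℝ] F) (hsurj : Function.Surjective A) :
    IsUnit (A ∘L ContinuousLinearMap.adjoint A) := by
  apply EDR.isUnit_of_bijective
  have hinj : Function.Injective (A ∘L ContinuousLinearMap.adjoint A) := by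
    intro x y hxy
    have h0 : A (ContinuousLinearMap.adjoint A (x - y)) = 0 := by
      simp only [map_sub]
      rw [sub_eq_zero]
      exact hxy
    have : (inner ℝ (ContinuousLinearMap.adjoint A (x - y)) (ContinuousLinearMap.adjoint A (x - y)) : ℝ) = 0 := by
      rw [ContinuousLinearMap.adjoint_inner_left, h0, inner_zero_right]
    have h1 : ContinuousLinearMap.adjoint A (x - y) = 0 := by
      exact inner_self_eq_zero.mp this
    -- adjoint injective since A surjective
    have hadjinj : Function.Injective (ContinuousLinearMap.adjoint A) := by
      intro u w huw
      have : ∀ z, (inner ℝ (u - w) (A z) : ℝ) = 0 := by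
        intro z
        rw [← ContinuousLinearMap.adjoint_inner_left]
        simp [map_sub, huw]
      have h2 : ∀ q, (inner ℝ (u - w) q : ℝ) = 0 := fun q => by
        obtain ⟨z, rfl⟩ := hsurj q; exact this z
      have := inner_self_eq_zero.mp (h2 (u - w))
      exact sub_eq_zero.mp this
    have := hadjinj (by simpa using h1 : ContinuousLinearMap.adjoint A (x - y) = ContinuousLinearMap.adjoint A 0)
    exact sub_eq_zero.mp this
  exact ⟨hinj, LinearMap.injective_iff_surjective.mp hinj⟩


namespace EDR


/-- the Lagrange system map. -/
def Hmap (g : E → F) : E × F → E × F :=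
  fun x => (x.1 + adjL (fderiv ℝ g x.1) x.2, g x.1)

lemma contDiff_adj_fderiv {g : E → F} (hg : ContDiff ℝ (⊤ : ℕ∞) g) :
    ContDiff ℝ (⊤ : ℕ∞) (fun y : E => adjL (fderiv ℝ g y)) :=
  ContDiff.comp ((adjL (E := E) (F := F)).contDiff) (hg.fderiv_right (by simp))

lemma contDiff_Hmap {g : E → F} (hg : ContDiff ℝ (⊤ : ℕ∞) g) :
    ContDiff ℝ (⊤ : ℕ∞) (Hmap g) := by
  apply ContDiff.prodMk
  · exact (contDiff_fst).add
      (ContDiff.clm_apply ((contDiff_adj_fderiv hg).comp contDiff_fst) contDiff_snd)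
  · exact hg.comp contDiff_fst

/-- the linearization of `Hmap` at `(p, 0)`. -/
def Lmap (A : E →L[ℝ] F) : (E × F) →L[ℝ] (E × F) :=
  (ContinuousLinearMap.fst ℝ E F
     + (ContinuousLinearMap.adjoint A).comp (ContinuousLinearMap.snd ℝ E F)).prod
  (A.comp (ContinuousLinearMap.fst ℝ E F))

lemma hasFDerivAt_Hmap {g : E → F} (hg : ContDiff ℝ (⊤ : ℕ∞) g) (p : E) :
    HasFDerivAt (Hmap g) (Lmap (fderiv ℝ g p)) (p, 0) := by
  apply HasFDerivAt.prodMk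
  · have hc : HasFDerivAt (fun x : E × F => adjL (fderiv ℝ g x.1))
        ((fderiv ℝ (fun y : E => adjL (fderiv ℝ g y)) p).comp
          (ContinuousLinearMap.fst ℝ E F)) (p, 0) := by
      exact (((contDiff_adj_fderiv hg).differentiable (by simp) p).hasFDerivAt).comp _
        (hasFDerivAt_fst (𝕜 := ℝ) (p := ((p, 0) : E × F)))
    have hu : HasFDerivAt (fun x : E × F => x.2) (ContinuousLinearMap.snd ℝ E F) (p, 0) :=
      hasFDerivAt_snd
    have := (hasFDerivAt_fst (𝕜 := ℝ) (p := ((p, 0) : E × F))).add (hc.clm_apply hu)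
    convert this using 1
    ext x
    · simp [Lmap]
    · simp [Lmap]
  · exact ((hg.differentiable (by simp) p).hasFDerivAt).comp _ (hasFDerivAt_fst (𝕜 := ℝ) (p := ((p, 0) : E × F)))

lemma lmap_bijective (A : E →L[ℝ] F) (hsurj : Function.Surjective A) :
    Function.Bijective (Lmap A) := by
  have hinj : Function.Injective (Lmap A) := by
    have hker : ∀ d : E × F, Lmap A d = 0 → d = 0 := by
      rintro ⟨dy, dl⟩ h
      have h1 : dy + ContinuousLinearMap.adjoint A dl = 0 := by
        have := congrArg Prod.fst h; simpa [Lmap] using this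
      have h2 : A dy = 0 := by
        have := congrArg Prod.snd h; simpa [Lmap] using this
      have hdy : dy = - ContinuousLinearMap.adjoint A dl := by
        rw [eq_neg_iff_add_eq_zero]; exact h1
      have hin : (inner ℝ dy dy : ℝ) = 0 := by
        nth_rewrite 2 [hdy]
        rw [inner_neg_right, ContinuousLinearMap.adjoint_inner_right, h2, inner_zero_left, neg_zero]
      have hdy0 : dy = 0 := inner_self_eq_zero.mp hin
      have hadj0 : ContinuousLinearMap.adjoint A dl = 0 := by
        have := h1; rw [hdy0, zero_add] at this; exact this
      have hdl0 : dl = 0 := by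
        have hforall : ∀ z : E, (inner ℝ dl (A z) : ℝ) = 0 := fun z => by
          rw [← ContinuousLinearMap.adjoint_inner_left, hadj0, inner_zero_left]
        have : (inner ℝ dl dl : ℝ) = 0 := by
          obtain ⟨z, hz⟩ := hsurj dl
          have h3 := hforall z
          rw [hz] at h3
          exact h3
        exact inner_self_eq_zero.mp this
      simp [Prod.ext_iff, hdy0, hdl0]
    intro x y hxy
    have h0 : Lmap A (x - y) = 0 := by rw [map_sub, hxy, sub_self]
    exact sub_eq_zero.mp (hker _ h0)
  exact ⟨hinj, LinearMap.injective_iff_surjective.mp hinj⟩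


/-- key surjectivity transfer -/
lemma surj_of_isUnit (B : E →L[ℝ] F) (h : IsUnit (B ∘L ContinuousLinearMap.adjoint B)) :
    Function.Surjective B := by
  obtain ⟨e, he⟩ := exists_equiv_of_isUnit _ h
  intro w
  refine ⟨ContinuousLinearMap.adjoint B (e.symm w), ?_⟩
  have : (B ∘L ContinuousLinearMap.adjoint B) (e.symm w) = w := by
    rw [← he]; exact e.apply_symm_apply w
  simpa using this

lemma adj_lambda (B : E →L[ℝ] F) (h : IsUnit (B ∘L ContinuousLinearMap.adjoint B))
    (u : E) (μ : F) (hu : ContinuousLinearMap.adjoint B μ = u) :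
    ContinuousLinearMap.adjoint B (Ring.inverse (B ∘L ContinuousLinearMap.adjoint B) (B u)) = u := by
  subst hu
  have h1 : (Ring.inverse (B ∘L ContinuousLinearMap.adjoint B) *
      (B ∘L ContinuousLinearMap.adjoint B)) μ = μ := by
    rw [Ring.inverse_mul_cancel _ h]; rfl
  have h2 : Ring.inverse (B ∘L ContinuousLinearMap.adjoint B)
      (B (ContinuousLinearMap.adjoint B μ)) = μ := h1
  rw [h2]

lemma isUnit_injective {G : Type*} [NormedAddCommGroup G] [NormedSpace ℝ G]
    (B : G →L[ℝ] G) (h : IsUnit B) : Function.Injective B := by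
  obtain ⟨e, he⟩ := exists_equiv_of_isUnit _ h
  rw [← he]; exact e.injective

lemma contDiffAt_deriv_of {X : Type*} [NormedAddCommGroup X] [NormedSpace ℝ X] {f : ℝ → X} {t : ℝ}
    (h : ContDiffAt ℝ (⊤ : ℕ∞) f t) : ContDiffAt ℝ (⊤ : ℕ∞) (deriv f) t := by
  have h1 : ContDiffAt ℝ (⊤ : ℕ∞) (fderiv ℝ f) t := h.fderiv_right (by simp)
  have h2 : (deriv f) = fun s => (fderiv ℝ f s) 1 := by
    funext s; rw [fderiv_apply_one_eq_deriv]
  rw [h2]; exact h1.clm_apply contDiffAt_const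


set_option maxHeartbeats 2000000 in
theorem main (g : E → F) (hg : ContDiff ℝ (⊤ : ℕ∞) g) (p : E) (hp : g p = 0)
    (hsurj : Function.Surjective (fderiv ℝ g p)) :
    ∃ ε > (0:ℝ), ∃ δ > (0:ℝ),
      ∃ R : E → E,
        ContDiffOn ℝ (⊤ : ℕ∞) R
          {v | v ∈ LinearMap.ker (fderiv ℝ g p : E →ₗ[ℝ] F) ∧ ‖v‖ < ε} ∧
        R 0 = p ∧
        ∀ v ∈ LinearMap.ker (fderiv ℝ g p : E →ₗ[ℝ] F), ‖v‖ < ε →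
          (g (R v) = 0 ∧
            (∀ y, g y = 0 → ‖y - p‖ < δ →
              ‖p + v - R v‖ ≤ ‖p + v - y‖ ∧
              (‖p + v - R v‖ = ‖p + v - y‖ → y = R v)) ∧
            deriv (fun t : ℝ => R (t • v)) 0 = v ∧
            deriv (deriv (fun t : ℝ => R (t • v))) 0 ∈
              (LinearMap.ker (fderiv ℝ g p : E →ₗ[ℝ] F))ᗮ) := by
  have hone : (1 : WithTop ℕ∞) ≤ ((⊤ : ℕ∞) : WithTop ℕ∞) := by
    exact_mod_cast le_top
  set A := fderiv ℝ g p with hA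
  have hH : ContDiff ℝ (⊤ : ℕ∞) (Hmap g) := contDiff_Hmap hg
  have hLbij : Function.Bijective (Lmap A) := lmap_bijective A hsurj
  let Lequiv : (E × F) ≃L[ℝ] (E × F) :=
    (LinearEquiv.ofBijective ((Lmap A) : (E × F) →ₗ[ℝ] (E × F)) hLbij).toContinuousLinearEquiv
  have hLcoe : (Lequiv : (E × F) →L[ℝ] (E × F)) = Lmap A := ContinuousLinearMap.ext fun x => rfl
  have hfd : HasFDerivAt (Hmap g) (Lequiv : (E × F) →L[ℝ] (E × F)) (p, 0) := by
    rw [hLcoe]; exact hasFDerivAt_Hmap hg p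
  let Φh : OpenPartialHomeomorph (E × F) (E × F) :=
    (hH.contDiffAt).toOpenPartialHomeomorph (Hmap g) hfd (by simp)
  have hΦcoe : (Φh : E × F → E × F) = Hmap g := rfl
  have hsource : (p, 0) ∈ Φh.source :=
    ContDiffAt.mem_toOpenPartialHomeomorph_source _ _ _
  have hH0 : Hmap g (p, 0) = (p, 0) := by simp [Hmap, hp]
  have htarget : (p, 0) ∈ Φh.target := by
    have := ContDiffAt.image_mem_toOpenPartialHomeomorph_target (hH.contDiffAt) hfd (by simp)
    rw [hH0] at this; exact this
  have hΦp : Φh.symm (p, 0) = (p, 0) := by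
    have := Φh.left_inv hsource
    rw [hΦcoe, hH0] at this; exact this
  -- invertibility neighborhood
  have hfderivL : fderiv ℝ (Hmap g) (p, 0) = Lmap A := (hasFDerivAt_Hmap hg p).fderiv
  have hcontfd : Continuous (fderiv ℝ (Hmap g)) := hH.continuous_fderiv (by simp)
  have hUopen : IsOpen {x : E × F | IsUnit (fderiv ℝ (Hmap g) x)} :=
    (Units.isOpen (R := (E × F) →L[ℝ] (E × F))).preimage hcontfd
  have hUmem : (p, 0) ∈ {x : E × F | IsUnit (fderiv ℝ (Hmap g) x)} := by
    show IsUnit (fderiv ℝ (Hmap g) (p, 0))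
    rw [hfderivL]; exact isUnit_of_bijective _ hLbij
  -- the good target neighborhood W
  set W : Set (E × F) :=
    Φh.target ∩ Φh.symm ⁻¹' {x : E × F | IsUnit (fderiv ℝ (Hmap g) x)} with hW
  have hWopen : IsOpen W := Φh.isOpen_inter_preimage_symm hUopen
  have hWmem : (p, 0) ∈ W := by
    constructor
    · exact htarget
    · refine Set.mem_preimage.mpr ?_
      rw [hΦp]; exact hUmem
  -- smoothness of the inverse on W
  have hΦsmooth : ∀ w ∈ W, ContDiffAt ℝ (⊤ : ℕ∞) Φh.symm w := by
    intro w hw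
    obtain ⟨hwt, hwu⟩ := hw
    obtain ⟨e, he⟩ := exists_equiv_of_isUnit _ hwu
    apply Φh.contDiffAt_symm hwt (f₀' := e)
    · rw [hΦcoe, he]
      exact ((hH.differentiable (by simp)) _).hasFDerivAt
    · rw [hΦcoe]; exact hH.contDiffAt
  -- multiplier neighborhood
  have hfdg : Continuous fun y : E => fderiv ℝ g y := hg.continuous_fderiv (by simp)
  set Ψ : E → (F →L[ℝ] F) :=
    fun y => (fderiv ℝ g y) ∘L ContinuousLinearMap.adjoint (fderiv ℝ g y) with hΨdef
  have hΨcont : Continuous Ψ := by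
    have hΨeq : Ψ = fun y => (fderiv ℝ g y) ∘L adjL (fderiv ℝ g y) := by
      funext y; rw [hΨdef, adjL_apply]
    rw [hΨeq]
    exact hfdg.clm_comp (adjL.continuous.comp hfdg)
  have hΨp : IsUnit (Ψ p) := isUnit_AAadj A hsurj
  set Λfun : E × E → F :=
    fun yz => Ring.inverse (Ψ yz.1) ((fderiv ℝ g yz.1) (yz.2 - yz.1)) with hΛdef
  set O : Set (E × E) := {yz : E × E | IsUnit (Ψ yz.1)} with hO
  have hOopen : IsOpen O := (Units.isOpen (R := F →L[ℝ] F)).preimage (hΨcont.comp continuous_fst)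
  have hΛcont : ContinuousOn Λfun O := by
    intro yz hyz
    apply ContinuousAt.continuousWithinAt
    have h1 : ContinuousAt Ring.inverse (Ψ yz.1) := by
      have h := NormedRing.inverse_continuousAt (hyz : IsUnit (Ψ yz.1)).unit
      rwa [IsUnit.unit_spec] at h
    have h2 : ContinuousAt (fun w : E × E => Ψ w.1) yz := (hΨcont.comp continuous_fst).continuousAt
    have h3 : ContinuousAt (fun w : E × E => Ring.inverse (Ψ w.1)) yz :=
      ContinuousAt.comp (g := Ring.inverse) (f := fun w : E × E => Ψ w.1) h1 h2
    have h4 : ContinuousAt (fun w : E × E => (fderiv ℝ g w.1) (w.2 - w.1)) yz :=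
      (((hfdg.comp continuous_fst).clm_apply (continuous_snd.sub continuous_fst))).continuousAt
    exact isBoundedBilinearMap_apply.continuous.continuousAt.comp (h3.prodMk h4)
  set Gs : Set (E × E) := O ∩ (fun yz : E × E => (yz.1, Λfun yz)) ⁻¹' Φh.source with hGs
  have hGopen : IsOpen Gs :=
    ContinuousOn.isOpen_inter_preimage ((continuous_fst.continuousOn).prodMk hΛcont)
      hOopen Φh.open_source
  have hGmem : (p, p) ∈ Gs := by
    constructor
    · exact hΨp
    · show (p, Λfun (p, p)) ∈ Φh.source
      have hz : Λfun (p, p) = 0 := by rw [hΛdef]; simp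
      rw [hz]; exact hsource
  -- radii
  obtain ⟨r1, hr1pos, hr1⟩ := Metric.isOpen_iff.mp hWopen _ hWmem
  obtain ⟨r2, hr2pos, hr2⟩ := Metric.isOpen_iff.mp hGopen _ hGmem
  set δ : ℝ := r2 / 2 with hδdef
  have hδpos : 0 < δ := by positivity
  set ε : ℝ := min (δ / 4) (r1 / 2) with hεdef
  have hεpos : 0 < ε := by
    apply lt_min <;> positivity
  have hεδ : ε ≤ δ / 4 := min_le_left _ _
  have hεr1 : ε < r1 := (min_le_right _ _).trans_lt (by linarith)
  have hδr2 : δ < r2 := by rw [hδdef]; linarith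
  have hball1 : ∀ w : E, ‖w‖ < r1 → ((p + w, (0 : F)) : E × F) ∈ W := by
    intro w hw
    apply hr1
    rw [Metric.mem_ball, Prod.dist_eq]
    have h1 : dist (p + w) p = ‖w‖ := by rw [dist_eq_norm]; simp
    have h2 : dist (0 : F) 0 = 0 := dist_self 0
    rw [h1, h2]
    exact max_lt hw hr1pos
  refine ⟨ε, hεpos, δ, hδpos, fun v => (Φh.symm (p + v, 0)).1, ?_, ?_, ?_⟩
  · -- smoothness
    intro v hv
    apply ContDiffAt.contDiffWithinAt
    have haff : ContDiffAt ℝ (⊤ : ℕ∞) (fun v : E => ((p + v, (0 : F)) : E × F)) v :=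
      (((contDiff_const.add contDiff_id).prodMk contDiff_const).contDiffAt)
    have hmemW : ((p + v, (0 : F)) : E × F) ∈ W := hball1 v (hv.2.trans hεr1)
    have hΦat : ContDiffAt ℝ (⊤ : ℕ∞) Φh.symm (p + v, 0) := hΦsmooth _ hmemW
    exact (contDiff_fst.contDiffAt).comp v (hΦat.comp v haff)
  · -- value at 0
    show (Φh.symm (p + 0, 0)).1 = p
    rw [add_zero, hΦp]
  · -- main pointwise claims
    intro v hvker hvε
    beta_reduce
    set z : E := p + v with hzdef
    have hznorm : ‖z - p‖ < ε := by
      rw [hzdef]; simpa using hvε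
    -- key uniqueness lemma
    have key : ∀ y : E, g y = 0 → ‖y - p‖ < r2 →
        (∀ᶠ x in 𝓝[{x : E | g x = 0}] y, ‖z - y‖ ≤ ‖z - x‖) →
        Φh.symm (z, 0) = (y, Λfun (y, z)) := by
      intro y hy hynear hymin
      have hyzG : ((y, z) : E × E) ∈ Gs := by
        apply hr2
        rw [Metric.mem_ball, Prod.dist_eq]
        rw [dist_eq_norm, dist_eq_norm]
        exact max_lt hynear (hznorm.trans (by rw [hεdef, hδdef]; linarith))
      obtain ⟨hyunit, hysrc⟩ := hyzG
      have hyunit' : IsUnit ((fderiv ℝ g y) ∘L ContinuousLinearMap.adjoint (fderiv ℝ g y)) := hyunit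
      have hysurj : Function.Surjective (fderiv ℝ g y) := surj_of_isUnit _ hyunit'
      -- Lagrange multipliers
      have hseteq : {x : E | g x = g y} = {x : E | g x = 0} := by rw [hy]
      have hext : IsLocalExtrOn (fun x => ‖z - x‖ ^ 2) {x : E | g x = g y} y := by
        apply Or.inl
        rw [hseteq]
        show ∀ᶠ x in 𝓝[{x : E | g x = 0}] y, ‖z - y‖ ^ 2 ≤ ‖z - x‖ ^ 2
        filter_upwards [hymin] with x hx
        exact pow_le_pow_left₀ (norm_nonneg _) hx 2
      have hgstrict : HasStrictFDerivAt g (fderiv ℝ g y) y :=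
        (hg.contDiffAt).hasStrictFDerivAt (by simp)
      have hsub : HasStrictFDerivAt (fun x : E => z - x)
          ((0 : E →L[ℝ] E) - ContinuousLinearMap.id ℝ E) y :=
        (hasStrictFDerivAt_const z y).sub (hasStrictFDerivAt_id y)
      have hφstrict : HasStrictFDerivAt (fun x : E => ‖z - x‖ ^ 2)
          (((2 : ℕ) • (innerSL ℝ (z - y))).comp
            ((0 : E →L[ℝ] E) - ContinuousLinearMap.id ℝ E)) y :=
        (hasStrictFDerivAt_norm_sq (z - y)).comp y hsub
      obtain ⟨Λ, Λ₀, hΛne, hrel⟩ :=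
        hext.exists_linear_map_of_hasStrictFDerivAt hgstrict hφstrict
      have hrel' : ∀ x : E, Λ (fderiv ℝ g y x) = (2 * Λ₀) * inner ℝ (z - y) x := by
        intro x
        have h := hrel x
        simp only [ContinuousLinearMap.comp_apply, ContinuousLinearMap.sub_apply,
          ContinuousLinearMap.zero_apply, ContinuousLinearMap.coe_id', id_eq,
          ContinuousLinearMap.smul_apply, innerSL_apply_apply, zero_sub, inner_neg_right,
          ContinuousLinearMap.neg_apply, ContinuousLinearMap.coe_id', id_eq,
          smul_eq_mul, nsmul_eq_mul, Nat.cast_ofNat] at h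
        linarith
      have hΛ₀ : Λ₀ ≠ 0 := by
        intro h0
        apply hΛne
        have hΛ0 : Λ = 0 := by
          apply LinearMap.ext
          intro w
          obtain ⟨x, rfl⟩ := hysurj w
          rw [hrel' x, h0]
          simp
        rw [hΛ0, h0]; rfl
      set wv : F := (InnerProductSpace.toDual ℝ F).symm (LinearMap.toContinuousLinearMap Λ)
        with hwv
      have hwvinner : ∀ u : F, inner ℝ wv u = Λ u := by
        intro u
        rw [hwv]
        exact InnerProductSpace.toDual_symm_apply
      have hadjw : ContinuousLinearMap.adjoint (fderiv ℝ g y) wv = (2 * Λ₀) • (z - y) := by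
        apply ext_inner_right ℝ
        intro x
        rw [ContinuousLinearMap.adjoint_inner_left, hwvinner, hrel' x,
          real_inner_smul_left]
      have hμ : ContinuousLinearMap.adjoint (fderiv ℝ g y) ((2 * Λ₀)⁻¹ • wv) = z - y := by
        rw [map_smul, hadjw, smul_smul, inv_mul_cancel₀ (mul_ne_zero two_ne_zero hΛ₀), one_smul]
      have hΛval : ContinuousLinearMap.adjoint (fderiv ℝ g y) (Λfun (y, z)) = z - y := by
        rw [hΛdef]
        exact adj_lambda (fderiv ℝ g y) hyunit' (z - y) _ hμ
      have hHy : Hmap g ((y, Λfun (y, z)) : E × F) = (z, 0) := by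
        have h1 : y + adjL (fderiv ℝ g y) (Λfun (y, z)) = z := by
          rw [adjL_apply, hΛval]; abel
        show (y + adjL (fderiv ℝ g y) (Λfun (y, z)), g y) = (z, 0)
        rw [h1, hy]
      have hli := Φh.left_inv hysrc
      rw [hΦcoe, hHy] at hli
      exact hli
    -- existence of a closest point
    have hzp : z - p = v := by rw [hzdef]; abel
    have hclosed : IsClosed {x : E | g x = 0} := isClosed_eq hg.continuous continuous_const
    have hCcomp : IsCompact ({x : E | g x = 0} ∩ Metric.closedBall p δ) :=
      (isCompact_closedBall p δ).inter_left hclosed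
    have hCne : ({x : E | g x = 0} ∩ Metric.closedBall p δ).Nonempty :=
      ⟨p, hp, Metric.mem_closedBall_self hδpos.le⟩
    obtain ⟨y0, hy0C, hy0min⟩ := hCcomp.exists_isMinOn hCne
      (((continuous_const.sub continuous_id').norm).continuousOn :
        ContinuousOn (fun x : E => ‖z - x‖) _)
    have hy0g : g y0 = 0 := hy0C.1
    have hy0z : ‖z - y0‖ ≤ ‖v‖ := by
      have h := (isMinOn_iff.mp hy0min) p ⟨hp, Metric.mem_closedBall_self hδpos.le⟩
      change ‖z - y0‖ ≤ ‖z - p‖ at h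
      rw [hzp] at h
      exact h
    have hy0p : ‖y0 - p‖ < 2 * ε := by
      have h1 : dist y0 p ≤ dist y0 z + dist z p := dist_triangle _ _ _
      rw [dist_eq_norm, dist_eq_norm, dist_eq_norm, hzp] at h1
      have h4 : ‖y0 - z‖ = ‖z - y0‖ := norm_sub_rev _ _
      have h2 : ‖v‖ < ε := hvε
      have h3 : ‖z - y0‖ < ε := lt_of_le_of_lt hy0z h2
      linarith
    have h2εδ : 2 * ε ≤ δ / 2 := by
      have := hεδ; linarith
    have hy0near : ‖y0 - p‖ < r2 := by
      have := hδr2; linarith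
    have hy0ev : ∀ᶠ x in 𝓝[{x : E | g x = 0}] y0, ‖z - y0‖ ≤ ‖z - x‖ := by
      have hball : Metric.ball y0 (δ / 2) ∈ 𝓝[{x : E | g x = 0}] y0 :=
        nhdsWithin_le_nhds (Metric.ball_mem_nhds _ (by positivity))
      filter_upwards [hball, self_mem_nhdsWithin] with x hx hgx
      refine (isMinOn_iff.mp hy0min) x ⟨hgx, ?_⟩
      rw [Metric.mem_closedBall]
      have h1 : dist x p ≤ dist x y0 + dist y0 p := dist_triangle _ _ _
      have h2 : dist x y0 < δ / 2 := Metric.mem_ball.mp hx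
      have h3 : dist y0 p < δ / 2 := by
        rw [dist_eq_norm]; linarith
      linarith
    have hkey0 := key y0 hy0g hy0near hy0ev
    have hRv : (Φh.symm ((z, 0) : E × F)).1 = y0 := by rw [hkey0]
    -- derivative of the retraction curve
    have hletop : (1 : WithTop ℕ∞) ≤ ((⊤ : ℕ∞) : WithTop ℕ∞) := hone
    set ψ : ℝ → E × F := fun t => Φh.symm (p + t • v, 0) with hψdef
    set I : Set ℝ := {t : ℝ | ‖t • v‖ < r1} with hIdef
    have hIopen : IsOpen I := by
      have hcont : Continuous fun t : ℝ => ‖t • v‖ := (continuous_id.smul continuous_const).norm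
      exact isOpen_lt hcont continuous_const
    have hI0 : (0 : ℝ) ∈ I := by
      show ‖(0 : ℝ) • v‖ < r1
      simpa using hr1pos
    have hmemI : ∀ t ∈ I, ((p + t • v, (0 : F)) : E × F) ∈ W := fun t ht => hball1 _ ht
    have hψsmooth : ∀ t ∈ I, ContDiffAt ℝ (⊤ : ℕ∞) ψ t := by
      intro t ht
      have haff : ContDiffAt ℝ (⊤ : ℕ∞) (fun t : ℝ => ((p + t • v, (0 : F)) : E × F)) t :=
        (((contDiff_const.add (contDiff_id.smul contDiff_const)).prodMk contDiff_const).contDiffAt)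
      exact (hΦsmooth _ (hmemI t ht)).comp t haff
    set aF : ℝ → E := fun t => (ψ t).1 with haFdef
    set bF : ℝ → F := fun t => (ψ t).2 with hbFdef
    have haSmooth : ∀ t ∈ I, ContDiffAt ℝ (⊤ : ℕ∞) aF t :=
      fun t ht => (contDiff_fst.contDiffAt).comp t (hψsmooth t ht)
    have hbSmooth : ∀ t ∈ I, ContDiffAt ℝ (⊤ : ℕ∞) bF t :=
      fun t ht => (contDiff_snd.contDiffAt).comp t (hψsmooth t ht)
    set AdjF : ℝ → (F →L[ℝ] E) := fun t => adjL (fderiv ℝ g (aF t)) with hAdjdef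
    have hAdjSmooth : ∀ t ∈ I, ContDiffAt ℝ (⊤ : ℕ∞) AdjF t :=
      fun t ht => ((contDiff_adj_fderiv hg).contDiffAt).comp t (haSmooth t ht)
    have hψeq : ∀ t ∈ I, Hmap g (ψ t) = (p + t • v, 0) := by
      intro t ht
      have hri := Φh.right_inv (hmemI t ht).1
      rw [hΦcoe] at hri
      exact hri
    have hE1 : ∀ t ∈ I, aF t + AdjF t (bF t) = p + t • v :=
      fun t ht => congrArg Prod.fst (hψeq t ht)
    have hE2 : ∀ t ∈ I, g (aF t) = 0 :=
      fun t ht => congrArg Prod.snd (hψeq t ht)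
    have hψ0 : ψ 0 = ((p, 0) : E × F) := by
      show Φh.symm (p + (0 : ℝ) • v, 0) = ((p, 0) : E × F)
      rw [zero_smul, add_zero, hΦp]
    have ha0 : aF 0 = p := by show (ψ 0).1 = p; rw [hψ0]
    have hb0 : bF 0 = 0 := by show (ψ 0).2 = 0; rw [hψ0]
    have hAdj0 : AdjF 0 = adjL A := by
      show adjL (fderiv ℝ g (aF 0)) = adjL A
      rw [ha0]
    have haD : ∀ t ∈ I, HasDerivAt aF (deriv aF t) t :=
      fun t ht => ((haSmooth t ht).differentiableAt (by simp)).hasDerivAt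
    have hbD : ∀ t ∈ I, HasDerivAt bF (deriv bF t) t :=
      fun t ht => ((hbSmooth t ht).differentiableAt (by simp)).hasDerivAt
    have hAdjD : ∀ t ∈ I, HasDerivAt AdjF (deriv AdjF t) t :=
      fun t ht => ((hAdjSmooth t ht).differentiableAt (by simp)).hasDerivAt
    have hD2 : ∀ t ∈ I, fderiv ℝ g (aF t) (deriv aF t) = 0 := by
      intro t ht
      have h1 : HasDerivAt (fun s => g (aF s)) (fderiv ℝ g (aF t) (deriv aF t)) t :=
        HasFDerivAt.comp_hasDerivAt t
          ((hg.differentiable (by simp)) (aF t)).hasFDerivAt (haD t ht)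
      have h2 : HasDerivAt (fun s => g (aF s)) 0 t := by
        have hev : (fun s => g (aF s)) =ᶠ[𝓝 t] fun _ => (0 : F) := by
          filter_upwards [hIopen.mem_nhds ht] with s hs using hE2 s hs
        exact (hasDerivAt_const t (0 : F)).congr_of_eventuallyEq hev
      exact h1.unique h2
    have hD1 : ∀ t ∈ I,
        deriv aF t + ((deriv AdjF t) (bF t) + AdjF t (deriv bF t)) = v := by
      intro t ht
      have h1 : HasDerivAt (fun s => aF s + AdjF s (bF s))
          (deriv aF t + ((deriv AdjF t) (bF t) + AdjF t (deriv bF t))) t :=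
        (haD t ht).add ((hAdjD t ht).clm_apply (hbD t ht))
      have h2 : HasDerivAt (fun s => aF s + AdjF s (bF s)) v t := by
        have hev : (fun s => aF s + AdjF s (bF s)) =ᶠ[𝓝 t] fun s => p + s • v := by
          filter_upwards [hIopen.mem_nhds ht] with s hs using hE1 s hs
        have hrhs : HasDerivAt (fun s : ℝ => p + s • v) v t := by
          simpa using ((hasDerivAt_id t).smul_const v).const_add p
        exact hrhs.congr_of_eventuallyEq hev
      exact h1.unique h2
    have hD1₀ := hD1 0 hI0
    rw [hb0, hAdj0, map_zero, zero_add] at hD1₀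
    have hD2₀ := hD2 0 hI0
    rw [ha0] at hD2₀
    have hAv : A v = 0 := hvker
    have hβ0 : deriv bF 0 = 0 := by
      have h1 : A (deriv aF 0 + adjL A (deriv bF 0)) = A v := congrArg A hD1₀
      rw [map_add, hD2₀, zero_add, hAv] at h1
      have h2 : (A ∘L ContinuousLinearMap.adjoint A) (deriv bF 0) =
          (A ∘L ContinuousLinearMap.adjoint A) 0 := by
        rw [map_zero]
        rw [adjL_apply] at h1
        exact h1
      exact isUnit_injective _ hΨp h2
    have hα : deriv aF 0 = v := by
      rw [hβ0, map_zero, add_zero] at hD1₀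
      exact hD1₀
    -- second derivative
    have hDaev : deriv aF =ᶠ[𝓝 0]
        (fun t => v - ((deriv AdjF t) (bF t) + AdjF t (deriv bF t))) := by
      filter_upwards [hIopen.mem_nhds hI0] with t ht
      exact (eq_sub_of_add_eq (hD1 t ht)).symm ▸ rfl
    have hAdj'smooth : ContDiffAt ℝ (⊤ : ℕ∞) (deriv AdjF) 0 :=
      contDiffAt_deriv_of (hAdjSmooth 0 hI0)
    have hb'smooth : ContDiffAt ℝ (⊤ : ℕ∞) (deriv bF) 0 :=
      contDiffAt_deriv_of (hbSmooth 0 hI0)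
    have hAdj'd : HasDerivAt (deriv AdjF) (deriv (deriv AdjF) 0) 0 :=
      (hAdj'smooth.differentiableAt (by simp)).hasDerivAt
    have hb'd : HasDerivAt (deriv bF) (deriv (deriv bF) 0) 0 :=
      (hb'smooth.differentiableAt (by simp)).hasDerivAt
    have hX : HasDerivAt (fun t => (deriv AdjF t) (bF t))
        ((deriv (deriv AdjF) 0) (bF 0) + (deriv AdjF 0) (deriv bF 0)) 0 :=
      hAdj'd.clm_apply (hbD 0 hI0)
    have hY : HasDerivAt (fun t => AdjF t (deriv bF t))
        ((deriv AdjF 0) (deriv bF 0) + AdjF 0 (deriv (deriv bF) 0)) 0 :=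
      (hAdjD 0 hI0).clm_apply hb'd
    have hG : HasDerivAt (fun t => v - ((deriv AdjF t) (bF t) + AdjF t (deriv bF t)))
        (0 - (((deriv (deriv AdjF) 0) (bF 0) + (deriv AdjF 0) (deriv bF 0)) +
          ((deriv AdjF 0) (deriv bF 0) + AdjF 0 (deriv (deriv bF) 0)))) 0 :=
      (hasDerivAt_const 0 v).sub (hX.add hY)
    have hGval : (0 - (((deriv (deriv AdjF) 0) (bF 0) + (deriv AdjF 0) (deriv bF 0)) +
          ((deriv AdjF 0) (deriv bF 0) + AdjF 0 (deriv (deriv bF) 0)))) =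
        - (adjL A (deriv (deriv bF) 0)) := by
      rw [hb0, hβ0, hAdj0]
      simp
    have hsecond : deriv (deriv aF) 0 = - (adjL A (deriv (deriv bF) 0)) := by
      rw [hDaev.deriv_eq, hG.deriv, hGval]
    have hmemorth : deriv (deriv aF) 0 ∈ (LinearMap.ker (A : E →ₗ[ℝ] F))ᗮ := by
      rw [hsecond, adjL_apply]
      have h1 := range_adjoint_le_orthogonal A (deriv (deriv bF) 0)
      exact Submodule.neg_mem _ h1
    refine ⟨?_, ?_, ?_, ?_⟩
    · rw [hRv]; exact hy0g
    · intro y hyg hynear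
      constructor
      · rw [hRv]
        exact (isMinOn_iff.mp hy0min) y ⟨hyg, by rw [Metric.mem_closedBall, dist_eq_norm]; exact hynear.le⟩
      · intro heq
        rw [hRv] at heq
        have hyev : ∀ᶠ x in 𝓝[{x : E | g x = 0}] y, ‖z - y‖ ≤ ‖z - x‖ := by
          have hball : Metric.ball y (δ - ‖y - p‖) ∈ 𝓝[{x : E | g x = 0}] y :=
            nhdsWithin_le_nhds (Metric.ball_mem_nhds _ (by linarith))
          filter_upwards [hball, self_mem_nhdsWithin] with x hx hgx
          rw [← heq]
          refine (isMinOn_iff.mp hy0min) x ⟨hgx, ?_⟩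
          rw [Metric.mem_closedBall]
          have h1 : dist x p ≤ dist x y + dist y p := dist_triangle _ _ _
          have h2 : dist x y < δ - ‖y - p‖ := Metric.mem_ball.mp hx
          have h3 : dist y p = ‖y - p‖ := dist_eq_norm _ _
          linarith
        have hkeyy := key y hyg (hynear.trans hδr2) hyev
        rw [hkeyy]
    · exact hα
    · exact hmemorth



end EDR
end EDRaux



/-- **Euclidean distance retraction** (Theorem 2.2 / `AbsMal2012`).
Let `g : ℝⁿ → ℝᵐ` be smooth, `M = g⁻¹(0)`, and `p ∈ M` a point where `dg_p` is
surjective.  Then there is a locally defined smooth map `R_p` on a small ball of the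
tangent space `T_pM = ker dg_p` which sends `v` to the unique local Euclidean-closest
point of `M` to `p + v`; it satisfies `R_p 0 = p`, the first-order retraction property
`(d/dt) R_p(tv)|₀ = v`, and the second-order property
`(d²/dt²) R_p(tv)|₀ ∈ N_pM = (T_pM)ᗮ`. -/
theorem euclidean_distance_retraction_exists
    (n m : ℕ) (g : EuclideanSpace ℝ (Fin n) → EuclideanSpace ℝ (Fin m))
    (hg : ContDiff ℝ (⊤ : ℕ∞) g)
    (p : EuclideanSpace ℝ (Fin n)) (hp : g p = 0)
    (hsurj : Function.Surjective (fderiv ℝ g p)) :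
    ∃ ε > (0:ℝ), ∃ δ > (0:ℝ),
      ∃ R : EuclideanSpace ℝ (Fin n) → EuclideanSpace ℝ (Fin n),
        ContDiffOn ℝ (⊤ : ℕ∞) R
          {v | v ∈ LinearMap.ker (fderiv ℝ g p : EuclideanSpace ℝ (Fin n) →ₗ[ℝ] EuclideanSpace ℝ (Fin m)) ∧ ‖v‖ < ε} ∧
        R 0 = p ∧
        ∀ v ∈ LinearMap.ker (fderiv ℝ g p : EuclideanSpace ℝ (Fin n) →ₗ[ℝ] EuclideanSpace ℝ (Fin m)), ‖v‖ < ε →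
          -- (i) `R v` is the unique local Euclidean-closest point of `M` to `p + v`
          (g (R v) = 0 ∧
            (∀ y, g y = 0 → ‖y - p‖ < δ →
              ‖p + v - R v‖ ≤ ‖p + v - y‖ ∧
              (‖p + v - R v‖ = ‖p + v - y‖ → y = R v)) ∧
          -- (iii) first-order retraction property: `c'(0) = v` for `c t = R (t • v)`
            deriv (fun t : ℝ => R (t • v)) 0 = v ∧
          -- (iv) second-order retraction property: `c''(0) ∈ N_pM`
            deriv (deriv (fun t : ℝ => R (t • v))) 0 ∈
              (LinearMap.ker (fderiv ℝ g p : EuclideanSpace ℝ (Fin n) →ₗ[ℝ] EuclideanSpace ℝ (Fin m)))ᗮ) := by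
  exact EDR.main g hg p hp hsurj
end

section
/- Let B be a real m×n matrix with rank m (m ≤ n), and let A be a real symmetric n×n matrix whose operator norm satisfies ‖A‖ < 1. Then the (m+n)×(m+n) block matrix with block rows [B, 0] and [I_n + A, Bᵀ] (where I_n is the n×n identity and 0 is the m×m zero block) is invertible. -/
open Matrix in

/-- Block-matrix invertibility underlying Lemma 2.5: if `B` is an `m × n` real matrix of
rank `m` and `A` is a symmetric `n × n` real matrix of (ℓ²-)operator norm `< 1`, then the
block matrix `[[B, 0], [Iₙ + A, Bᵀ]]` is invertible (its associated linear map
`ℝⁿ × ℝᵐ → ℝᵐ × ℝⁿ` is bijective). -/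
theorem block_jacobian_invertible
    (m n : ℕ) (B : Matrix (Fin m) (Fin n) ℝ) (hB : B.rank = m)
    (A : Matrix (Fin n) (Fin n) ℝ) (hA : A.IsSymm)
    (hnorm : ‖Matrix.toEuclideanCLM (𝕜 := ℝ) A‖ < 1) :
    Function.Bijective
      (Matrix.mulVecLin
        (Matrix.fromBlocks B (0 : Matrix (Fin m) (Fin m) ℝ) (1 + A) Bᵀ)) := by
  have hfin : Module.finrank ℝ (Fin n ⊕ Fin m → ℝ) = Module.finrank ℝ (Fin m ⊕ Fin n → ℝ) := by
    simp [Module.finrank_pi, add_comm]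
  -- injectivity of Bᵀ.mulVecLin
  have hBt : Function.Injective Bᵀ.mulVecLin := by
    rw [← LinearMap.ker_eq_bot]
    have h1 := LinearMap.finrank_range_add_finrank_ker Bᵀ.mulVecLin
    have h2 : Bᵀ.rank = m := by rw [Matrix.rank_transpose, hB]
    rw [← Matrix.rank] at h1
    rw [h2] at h1
    have h3 : Module.finrank ℝ (Fin m → ℝ) = m := by simp
    rw [h3] at h1
    have : Module.finrank ℝ (LinearMap.ker Bᵀ.mulVecLin) = 0 := by omega
    exact Submodule.finrank_eq_zero.mp this
  rw [Function.Bijective,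
    ← LinearMap.injective_iff_surjective_of_finrank_eq_finrank hfin, and_self]
  rw [← LinearMap.ker_eq_bot, LinearMap.ker_eq_bot']
  intro v hv
  set x : Fin n → ℝ := v ∘ Sum.inl with hx
  set y : Fin m → ℝ := v ∘ Sum.inr with hy
  rw [Matrix.mulVecLin_apply, Matrix.fromBlocks_mulVec] at hv
  have h1 : B.mulVec x = 0 := by
    have := congrFun hv
    have h := funext fun i => this (Sum.inl i)
    simp at h; exact h
  have h2 : (1 + A).mulVec x + Bᵀ.mulVec y = 0 := by
    have := congrFun hv
    have h := funext fun i => this (Sum.inr i)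
    simp at h; exact h
  -- key: x = 0
  have hx0 : x = 0 := by
    by_contra hxne
    have hdot : x ⬝ᵥ ((1 + A).mulVec x + Bᵀ.mulVec y) = 0 := by rw [h2, dotProduct_zero]
    have hBty : x ⬝ᵥ Bᵀ.mulVec y = 0 := by
      rw [Matrix.dotProduct_mulVec, Matrix.vecMul_transpose, h1, zero_dotProduct]
    rw [dotProduct_add, hBty, add_zero, Matrix.add_mulVec, Matrix.one_mulVec,
      dotProduct_add] at hdot
    -- pass to EuclideanSpace
    set x' : EuclideanSpace ℝ (Fin n) := (WithLp.equiv 2 (Fin n → ℝ)).symm x with hx'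
    have hxx : x ⬝ᵥ x = ‖x'‖ ^ 2 := by
      rw [← real_inner_self_eq_norm_sq]
      simp [hx', PiLp.inner_apply, dotProduct, mul_comm]
      rw [EuclideanSpace.norm_eq, Real.sq_sqrt (by positivity)]
      simp [sq]
    have hAx : x ⬝ᵥ A.mulVec x = inner ℝ x' (Matrix.toEuclideanCLM (𝕜 := ℝ) A x') := by
      rw [hx', WithLp.equiv_symm_apply, Matrix.toEuclideanCLM_toLp]
      simp [hx', PiLp.inner_apply, dotProduct, Matrix.toLin'_apply]
      exact Finset.sum_congr rfl fun i _ => mul_comm _ _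
    have hx'ne : x' ≠ 0 := by
      intro h
      apply hxne
      have := congrArg (WithLp.equiv 2 (Fin n → ℝ)) h
      simpa [hx'] using this
    have hnx : 0 < ‖x'‖ := norm_pos_iff.mpr hx'ne
    have hcs : |(inner ℝ x' (Matrix.toEuclideanCLM (𝕜 := ℝ) A x') : ℝ)|
        ≤ ‖Matrix.toEuclideanCLM (𝕜 := ℝ) A‖ * ‖x'‖ ^ 2 := by
      calc |(inner ℝ x' (Matrix.toEuclideanCLM (𝕜 := ℝ) A x') : ℝ)|
          ≤ ‖x'‖ * ‖Matrix.toEuclideanCLM (𝕜 := ℝ) A x'‖ := abs_real_inner_le_norm _ _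
        _ ≤ ‖x'‖ * (‖Matrix.toEuclideanCLM (𝕜 := ℝ) A‖ * ‖x'‖) := by
            gcongr
            exact (Matrix.toEuclideanCLM (𝕜 := ℝ) A).le_opNorm x'
        _ = ‖Matrix.toEuclideanCLM (𝕜 := ℝ) A‖ * ‖x'‖ ^ 2 := by ring
    have : (0 : ℝ) < ‖x'‖ ^ 2 + inner ℝ x' (Matrix.toEuclideanCLM (𝕜 := ℝ) A x') := by
      have h4 : -(‖Matrix.toEuclideanCLM (𝕜 := ℝ) A‖ * ‖x'‖ ^ 2)
          ≤ inner ℝ x' (Matrix.toEuclideanCLM (𝕜 := ℝ) A x') := neg_le_of_abs_le hcs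
      nlinarith [mul_pos (sub_pos.mpr hnorm) (pow_pos hnx 2)]
    rw [hxx, hAx] at hdot
    linarith
  have hy0 : Bᵀ.mulVec y = 0 := by
    rw [hx0] at h2
    simpa using h2
  have hy0' : y = 0 := hBt (by rw [map_zero, Matrix.mulVecLin_apply]; exact hy0)
  funext i
  cases i with
  | inl i => exact congrFun hx0 i
  | inr i => exact congrFun hy0' i
end
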